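/- Let G be an (m,n)-colored mixed graph with maximum degree Δ, where (m,n) ≠ (0,1), and let G² be the simple graph on V(G) in which two vertices are adjacent iff they are adjacent in G or joined by a special 2-path (a 2-path uwv with σ(uw) ≠ σ(wv)). Then G² is (⌊(2m+n−1)Δ²/(2m+n)⌋ + Δ)-degenerate. -/

import Mathlib

open Finset

section Aux

lemma aux_div_mono (k d D : ℕ) (hk : 2 ≤ k) (hdD : d ≤ D) :
    D * ((k - 1) * d ^ 2 / k) ≤ d * ((k - 1) * D ^ 2 / k) := by
  rcases eq_or_lt_of_le hdD with rfl | hlt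
  · exact le_rfl
  rcases Nat.eq_zero_or_pos d with rfl | hd
  · simp
  have hkpos : 0 < k := by omega
  refine Nat.le_of_mul_le_mul_left ?_ hkpos
  have h1 : k * (D * ((k - 1) * d ^ 2 / k)) ≤ D * ((k - 1) * d ^ 2) := by
    rw [mul_left_comm]
    exact Nat.mul_le_mul_left D (Nat.mul_div_le _ k)
  have h2 : d * ((k - 1) * D ^ 2 - (k - 1)) ≤ k * (d * ((k - 1) * D ^ 2 / k)) := by
    rw [mul_left_comm]
    refine Nat.mul_le_mul_left d ?_
    have hmod := Nat.div_add_mod ((k - 1) * D ^ 2) k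
    have hlt' := Nat.mod_lt ((k - 1) * D ^ 2) hkpos
    omega
  refine le_trans h1 (le_trans ?_ h2)
  have hfac : (k - 1) * D ^ 2 - (k - 1) = (k - 1) * (D ^ 2 - 1) := by
    rw [Nat.mul_sub]
    ring_nf
  rw [hfac]
  have core : D * d ^ 2 ≤ d * (D ^ 2 - 1) := by
    have h4 : D * d ≤ D ^ 2 - 1 := by
      have : D * d ≤ D * (D - 1) := Nat.mul_le_mul_left D (by omega)
      have h5 : D * (D - 1) = D ^ 2 - D := by rw [Nat.mul_sub]; ring_nf
      omega
    calc D * d ^ 2 = d * (D * d) := by ring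
      _ ≤ d * (D ^ 2 - 1) := Nat.mul_le_mul_left d h4
  calc D * ((k - 1) * d ^ 2) = (k - 1) * (D * d ^ 2) := by ring
    _ ≤ (k - 1) * (d * (D ^ 2 - 1)) := Nat.mul_le_mul_left _ core
    _ = d * ((k - 1) * (D ^ 2 - 1)) := by ring

lemma pairs_bound {V : Type} [DecidableEq V] (s : Finset V) (g : V → ℤ) (k : ℕ) (hk : 0 < k)
    (himg : (s.image g).card ≤ k) :
    ∑ v ∈ s, (s.filter (fun u => g u ≠ g v)).card ≤ (k - 1) * s.card ^ 2 / k := by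
  classical
  set c : ℤ → ℕ := fun a => (s.filter (fun u => g u = a)).card with hc
  have hsplit : ∀ v ∈ s, (s.filter (fun u => g u ≠ g v)).card + c (g v) = s.card := by
    intro v hv
    have := Finset.card_filter_add_card_filter_not (s := s) (p := fun u => g u = g v)
    simp only [ne_eq, hc]
    simpa [add_comm] using this
  have hsum1 : ∑ v ∈ s, c (g v) = ∑ b ∈ s.image g, c b ^ 2 := by
    rw [Finset.sum_comp c g]
    refine Finset.sum_congr rfl fun b _ => ?_
    simp [hc, sq, smul_eq_mul]
  have hcard : s.card = ∑ b ∈ s.image g, c b := Finset.card_eq_sum_card_image g s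
  set C := ∑ b ∈ s.image g, c b ^ 2 with hC
  have hCS : s.card ^ 2 ≤ k * C := by
    calc s.card ^ 2 = (∑ b ∈ s.image g, c b) ^ 2 := by rw [hcard]
      _ ≤ (s.image g).card * C := sq_sum_le_card_mul_sum_sq
      _ ≤ k * C := Nat.mul_le_mul_right C himg
  set P := ∑ v ∈ s, (s.filter (fun u => g u ≠ g v)).card with hP
  have hsum2 : P + C = s.card * s.card := by
    rw [hP, ← hsum1, ← Finset.sum_add_distrib, Finset.sum_congr rfl hsplit,
      Finset.sum_const, smul_eq_mul]
  rw [Nat.le_div_iff_mul_le hk]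
  have h2 : P * k + s.card ^ 2 ≤ k * s.card ^ 2 :=
    calc P * k + s.card ^ 2 ≤ P * k + k * C := by omega
      _ = k * (P + C) := by ring
      _ = k * (s.card * s.card) := by rw [hsum2]
      _ = k * s.card ^ 2 := by ring
  have h3 : (k - 1) * s.card ^ 2 + s.card ^ 2 = k * s.card ^ 2 := by
    have : (k - 1) * s.card ^ 2 = k * s.card ^ 2 - 1 * s.card ^ 2 := Nat.sub_mul k 1 _
    have h4 : 1 * s.card ^ 2 ≤ k * s.card ^ 2 := Nat.mul_le_mul_right _ hk
    omega
  omega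

end Aux


/-- An `(m,n)`-colored mixed graph: a simple underlying graph together with a
labeling `lab` of ordered adjacent pairs.  Arcs get labels with absolute value in
`{1,...,m}` (reversal negates the label) and edges get labels in
`{m+1,...,m+n}` (reversal preserves the label).  Non-adjacent pairs get `0`. -/
structure CMG (V : Type) (m n : ℕ) where
  G : SimpleGraph V
  lab : V → V → ℤ
  lab_eq_zero : ∀ ⦃u v : V⦄, ¬ G.Adj u v → lab u v = 0
  lab_mem : ∀ ⦃u v : V⦄, G.Adj u v →
    (1 ≤ lab u v ∧ lab u v ≤ (m : ℤ) + n) ∨ (-(m : ℤ) ≤ lab u v ∧ lab u v ≤ -1)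
  lab_rev_arc : ∀ ⦃u v : V⦄, G.Adj u v → lab u v ≤ (m : ℤ) → lab v u = - lab u v
  lab_rev_edge : ∀ ⦃u v : V⦄, G.Adj u v → (m : ℤ) < lab u v → lab v u = lab u v

/-- `u` sees `v`: they are adjacent or joined by a special 2-path
(a 2-path `u-w-v` with `lab u w ≠ lab v w`). -/
def CMG.sees {V : Type} {m n : ℕ} (H : CMG V m n) (u v : V) : Prop :=
  H.G.Adj u v ∨ ∃ w : V, H.G.Adj u w ∧ H.G.Adj v w ∧ H.lab u w ≠ H.lab v w

/-- The square of an `(m,n)`-colored mixed graph: vertices adjacent iff they see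
each other (adjacent in `G` or joined by a special 2-path). -/
def CMG.square {V : Type} {m n : ℕ} (H : CMG V m n) : SimpleGraph V where
  Adj u v := u ≠ v ∧ H.sees u v
  symm := ⟨by
    rintro u v ⟨huv, h | ⟨w, h1, h2, h3⟩⟩
    · exact ⟨huv.symm, Or.inl h.symm⟩
    · exact ⟨huv.symm, Or.inr ⟨w, h2, h1, h3.symm⟩⟩⟩
  loopless := ⟨fun v h => h.1 rfl⟩

theorem square_degenerate {V : Type} [Fintype V] (m n Δ : ℕ) (hmn : (m, n) ≠ (0, 1))
    (H : CMG V m n) (hΔ : ∀ v : V, (H.G.neighborSet v).ncard ≤ Δ) :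
    ∀ X : Set V, X.Nonempty → ∃ v ∈ X,
      ({u ∈ X | H.square.Adj v u}).ncard ≤ ((2 * m + n - 1) * Δ ^ 2) / (2 * m + n) + Δ := by
  classical
  intro X hX
  obtain ⟨x0, hx0⟩ := hX
  set k := 2 * m + n with hkdef
  -- translate set cardinalities to finsets
  have hncard : ∀ v : V, ({u ∈ X | H.square.Adj v u}).ncard
      = (X.toFinset.filter (fun u => H.square.Adj v u)).card := by
    intro v
    rw [← Set.ncard_coe_finset]
    congr 1
    ext u
    simp [Set.mem_toFinset]
  -- trivial case: no colors at all, hence no edges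
  rcases Nat.eq_zero_or_pos k with hk0 | hkpos
  · have hm0 : m = 0 := by omega
    have hn0 : n = 0 := by omega
    have hnoadj : ∀ u v : V, ¬ H.G.Adj u v := by
      intro u v hadj
      have := H.lab_mem hadj
      omega
    refine ⟨x0, hx0, ?_⟩
    have : {u ∈ X | H.square.Adj x0 u} = ∅ := by
      ext u
      simp only [Set.mem_setOf_eq, Set.mem_empty_iff_false, iff_false, not_and]
      intro _ hadj
      rcases hadj.2 with h | ⟨w, h1, _⟩
      · exact hnoadj x0 u h
      · exact hnoadj x0 w h1
    rw [this]
    simp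
  have hk2 : 2 ≤ k := by
    rcases Nat.lt_or_ge k 2 with h | h
    · exfalso
      have : m = 0 ∧ n = 1 := by omega
      exact hmn (by simp [this.1, this.2])
    · exact h
  -- degree bound
  have hdeg : ∀ v : V, H.G.degree v ≤ Δ := by
    intro v
    have h := hΔ v
    rwa [← Nat.card_coe_set_eq, Nat.card_eq_fintype_card,
      SimpleGraph.card_neighborSet_eq_degree] at h
  set Xf := X.toFinset with hXf
  set N : V → Finset V := fun w => Xf.filter (fun u => H.G.Adj u w) with hN
  have hNle : ∀ w : V, (N w).card ≤ Δ := by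
    intro w
    refine le_trans (Finset.card_le_card ?_) (hdeg w)
    intro u hu
    simp only [hN, Finset.mem_filter] at hu
    simpa [SimpleGraph.mem_neighborFinset] using hu.2.symm
  set f : ℕ → ℕ := fun d => (k - 1) * d ^ 2 / k with hf
  set P : V → V → Finset V := fun v w =>
    Xf.filter (fun u => H.G.Adj u w ∧ H.G.Adj v w ∧ H.lab u w ≠ H.lab v w) with hPdef
  -- per-vertex bound
  have hper : ∀ v ∈ Xf, (Xf.filter (fun u => H.square.Adj v u)).card
      ≤ Δ + ∑ w : V, (P v w).card := by
    intro v hv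
    have hsub : Xf.filter (fun u => H.square.Adj v u)
        ⊆ H.G.neighborFinset v ∪ Finset.univ.biUnion (fun w => P v w) := by
      intro u hu
      simp only [Finset.mem_filter] at hu
      obtain ⟨huX, hne, hsees⟩ := hu
      rcases hsees with h | ⟨w, h1, h2, h3⟩
      · exact Finset.mem_union_left _ (by simpa [SimpleGraph.mem_neighborFinset] using h)
      · refine Finset.mem_union_right _ (Finset.mem_biUnion.2 ⟨w, Finset.mem_univ w, ?_⟩)
        simp only [hPdef, Finset.mem_filter]
        exact ⟨huX, h2, h1, h3.symm⟩
    calc (Xf.filter (fun u => H.square.Adj v u)).card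
        ≤ (H.G.neighborFinset v ∪ Finset.univ.biUnion (fun w => P v w)).card :=
          Finset.card_le_card hsub
      _ ≤ (H.G.neighborFinset v).card + (Finset.univ.biUnion (fun w => P v w)).card :=
          Finset.card_union_le _ _
      _ ≤ Δ + ∑ w : V, (P v w).card :=
          Nat.add_le_add (hdeg v) (Finset.card_biUnion_le)
  -- inner double counting per middle vertex
  have hmid : ∀ w : V, ∑ v ∈ Xf, (P v w).card ≤ f ((N w).card) := by
    intro w
    have hzero : ∀ v ∈ Xf, v ∉ N w → (P v w).card = 0 := by
      intro v hv hvn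
      have : ¬ H.G.Adj v w := by
        simp only [hN, Finset.mem_filter] at hvn
        tauto
      rw [Finset.card_eq_zero]
      refine Finset.filter_eq_empty_iff.2 ?_
      intro u hu
      tauto
    have hrestrict : ∑ v ∈ Xf, (P v w).card = ∑ v ∈ N w, (P v w).card := by
      refine (Finset.sum_subset (Finset.filter_subset _ _) ?_).symm
      intro v hv hvn
      exact hzero v hv hvn
    rw [hrestrict]
    have hsub2 : ∀ v ∈ N w, (P v w).card
        ≤ ((N w).filter (fun u => H.lab u w ≠ H.lab v w)).card := by
      intro v hv
      refine Finset.card_le_card ?_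
      intro u hu
      simp only [hPdef, Finset.mem_filter] at hu
      simp only [hN, Finset.mem_filter]
      exact ⟨⟨hu.1, hu.2.1⟩, hu.2.2.2⟩
    have himg : ((N w).image (fun u => H.lab u w)).card ≤ k := by
      have hsubI : (N w).image (fun u => H.lab u w)
          ⊆ (Finset.Icc (-(m : ℤ)) (-1)) ∪ (Finset.Icc 1 ((m : ℤ) + n)) := by
        intro a ha
        obtain ⟨u, hu, rfl⟩ := Finset.mem_image.1 ha
        simp only [hN, Finset.mem_filter] at hu
        rcases H.lab_mem hu.2 with ⟨h1, h2⟩ | ⟨h1, h2⟩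
        · exact Finset.mem_union_right _ (Finset.mem_Icc.2 ⟨h1, h2⟩)
        · exact Finset.mem_union_left _ (Finset.mem_Icc.2 ⟨h1, h2⟩)
      calc ((N w).image (fun u => H.lab u w)).card
          ≤ ((Finset.Icc (-(m : ℤ)) (-1)) ∪ (Finset.Icc 1 ((m : ℤ) + n))).card :=
            Finset.card_le_card hsubI
        _ ≤ (Finset.Icc (-(m : ℤ)) (-1)).card + (Finset.Icc 1 ((m : ℤ) + n)).card :=
            Finset.card_union_le _ _
        _ ≤ k := by
            rw [Int.card_Icc, Int.card_Icc]
            push_cast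
            omega
    calc ∑ v ∈ N w, (P v w).card
        ≤ ∑ v ∈ N w, ((N w).filter (fun u => H.lab u w ≠ H.lab v w)).card :=
          Finset.sum_le_sum hsub2
      _ ≤ f ((N w).card) := pairs_bound (N w) (fun u => H.lab u w) k (by omega) himg
  -- degree sum double counting
  have hdouble : ∑ w : V, (N w).card ≤ Xf.card * Δ := by
    have hswap : ∑ w : V, (N w).card
        = ∑ u ∈ Xf, (Finset.univ.filter (fun w => H.G.Adj u w)).card := by
      simp only [hN, Finset.card_filter]
      rw [Finset.sum_comm]
    rw [hswap]
    have : ∀ u ∈ Xf, (Finset.univ.filter (fun w => H.G.Adj u w)).card ≤ Δ := by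
      intro u _
      have : Finset.univ.filter (fun w => H.G.Adj u w) = H.G.neighborFinset u := by
        ext w
        simp [SimpleGraph.mem_neighborFinset]
      rw [this]
      exact hdeg u
    calc ∑ u ∈ Xf, (Finset.univ.filter (fun w => H.G.Adj u w)).card
        ≤ Xf.card • Δ := Finset.sum_le_card_nsmul _ _ Δ this
      _ = Xf.card * Δ := by rw [smul_eq_mul]
  -- sum of f over middles
  have hfsum : ∑ w : V, f ((N w).card) ≤ Xf.card * f Δ := by
    rcases Nat.eq_zero_or_pos Δ with hΔ0 | hΔpos
    · have : ∀ w : V, f ((N w).card) = 0 := by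
        intro w
        have := hNle w
        have hN0 : (N w).card = 0 := by omega
        simp [hf, hN0]
      rw [Finset.sum_congr rfl (fun w _ => this w)]
      simp
    · refine Nat.le_of_mul_le_mul_left ?_ hΔpos
      calc Δ * ∑ w : V, f ((N w).card)
          = ∑ w : V, Δ * f ((N w).card) := Finset.mul_sum _ _ _
        _ ≤ ∑ w : V, (N w).card * f Δ := by
            refine Finset.sum_le_sum fun w _ => ?_
            exact aux_div_mono k ((N w).card) Δ hk2 (hNle w)
        _ = (∑ w : V, (N w).card) * f Δ := (Finset.sum_mul _ _ _).symm
        _ ≤ Xf.card * Δ * f Δ := Nat.mul_le_mul_right _ hdouble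
        _ = Δ * (Xf.card * f Δ) := by ring
  -- total bound & pigeonhole
  have htotal : ∑ v ∈ Xf, (Xf.filter (fun u => H.square.Adj v u)).card
      ≤ ∑ _v ∈ Xf, (f Δ + Δ) := by
    calc ∑ v ∈ Xf, (Xf.filter (fun u => H.square.Adj v u)).card
        ≤ ∑ v ∈ Xf, (Δ + ∑ w : V, (P v w).card) := Finset.sum_le_sum hper
      _ = Xf.card * Δ + ∑ v ∈ Xf, ∑ w : V, (P v w).card := by
          rw [Finset.sum_add_distrib, Finset.sum_const, smul_eq_mul]
      _ = Xf.card * Δ + ∑ w : V, ∑ v ∈ Xf, (P v w).card := by rw [Finset.sum_comm]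
      _ ≤ Xf.card * Δ + ∑ w : V, f ((N w).card) := by
          exact Nat.add_le_add_left (Finset.sum_le_sum fun w _ => hmid w) _
      _ ≤ Xf.card * Δ + Xf.card * f Δ := Nat.add_le_add_left hfsum _
      _ = ∑ _v ∈ Xf, (f Δ + Δ) := by
          rw [Finset.sum_const, smul_eq_mul]
          ring
  have hne : Xf.Nonempty := ⟨x0, by simp [hXf, Set.mem_toFinset, hx0]⟩
  obtain ⟨v, hv, hvle⟩ := Finset.exists_le_of_sum_le hne htotal
  refine ⟨v, by simpa [hXf, Set.mem_toFinset] using hv, ?_⟩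
  rw [hncard v]
  exact hvle
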